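/- Single vertex extension: let X^* be a filtered simplicial complex with vertex set V and monotone size function D_X, let w ∈ V and r ≥ 0, and define the extension X_{w,r}^* on V ∪ {v_0} (v_0 a new vertex) by D̃(α) = D_X(α) for nonempty α ⊆ V and D̃(α ∪ {v_0}) = D_X(α ∪ {w}) + r (with D̃({v_0}) = D_X({w}) + r). Then: (1) D̃ is monotone; (2) δ_{X_{w,r}}(v_0, w) = 0, hence d_I^F(X_{w,r}^*, X^*) = 0; (3) every tripod Z between X^* and X_{w,r}^* has dis(Z) ≥ r, hence d_GH(X_{w,r}^*, X^*) ≥ r/2. -/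
import Mathlib


open Finset Function

noncomputable section
open scoped Classical

variable {V W U : Type} [Fintype V] [Fintype W] [Fintype U]

/-- A size function is monotone on nonempty subsets. -/
def Monot (D : Finset V → ℝ) : Prop :=
  ∀ ⦃α β : Finset V⦄, α.Nonempty → α ⊆ β → D α ≤ D β

/-- `max 0 (sup over nonempty subsets of the vertex set of g)`. -/
def supSub (g : Finset V → ℝ) : ℝ :=
  ((Finset.univ : Finset V).powerset.filter Finset.Nonempty).fold max 0 g

/-- Degree of a morphism: least `r ≥ 0` with `D_Y (f α) ≤ D_X α + r` for all nonempty `α`. -/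
def degF (DX : Finset V → ℝ) (DY : Finset W → ℝ) (f : V → W) : ℝ :=
  supSub fun α => DY (α.image f) - DX α

/-- Codegree: least `r ≥ 0` with `D_Y (f α ∪ g α) ≤ D_X α + r` for all nonempty `α`. -/
def codegF (DX : Finset V → ℝ) (DY : Finset W → ℝ) (f g : V → W) : ℝ :=
  supSub fun α => DY (α.image f ∪ α.image g) - DX α

/-- `codeg^∞`: minimum over chains `f = F 0, …, F n = g` of the max codegree of
consecutive terms. -/
def codegInfF (DX : Finset V → ℝ) (DY : Finset W → ℝ) (f g : V → W) : ℝ :=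
  sInf { c : ℝ | ∃ n : ℕ, 0 < n ∧ ∃ F : ℕ → V → W, F 0 = f ∧ F n = g ∧
    c = (Finset.range n).fold max 0 fun i => codegF DX DY (F i) (F (i + 1)) }

/-- `(f, g)` is an `ε`-interleaving between the filtered complexes given by `DX`, `DY`. -/
def IsInterleaving (DX : Finset V → ℝ) (DY : Finset W → ℝ)
    (f : V → W) (g : W → V) (ε : ℝ) : Prop :=
  degF DX DY f ≤ ε ∧ degF DY DX g ≤ ε ∧
  codegInfF DX DX (g ∘ f) id ≤ 2 * ε ∧ codegInfF DY DY (f ∘ g) id ≤ 2 * ε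

/-- The interleaving distance between filtered simplicial complexes. -/
def dIF (DX : Finset V → ℝ) (DY : Finset W → ℝ) : ℝ :=
  sInf { ε : ℝ | 0 ≤ ε ∧ ∃ f g, IsInterleaving DX DY f g ε }

/-- The vertex quasi-distance `δ_X(v,w)`. -/
def vqd (D : Finset V → ℝ) (v w : V) : ℝ :=
  supSub fun α => D (insert w α) - D (insert v α)

/-- Distortion of a correspondence `R ⊆ V × W`, viewed as a tripod via the projections. -/
def corDis (DX : Finset V → ℝ) (DY : Finset W → ℝ) (R : Finset (V × W)) : ℝ :=
  (R.powerset.filter Finset.Nonempty).fold max 0 fun α =>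
    |DX (α.image Prod.fst) - DY (α.image Prod.snd)|

/-- Gromov–Hausdorff distance (via correspondences). -/
def dGHcor (DX : Finset V → ℝ) (DY : Finset W → ℝ) : ℝ :=
  (1 / 2) * sInf { c : ℝ | ∃ R : Finset (V × W),
    (∀ v : V, ∃ w, (v, w) ∈ R) ∧ (∀ w : W, ∃ v, (v, w) ∈ R) ∧ c = corDis DX DY R }

/-- Distortion of a tripod `(Z, p, q)`. -/
def trdis (DX : Finset V → ℝ) (DY : Finset W → ℝ) {Z : Type} [Fintype Z]
    (p : Z → V) (q : Z → W) : ℝ :=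
  supSub fun α : Finset Z => |DX (α.image p) - DY (α.image q)|

/-- Gromov–Hausdorff distance between filtered simplicial complexes (via tripods). -/
def dGHtri (DX : Finset V → ℝ) (DY : Finset W → ℝ) : ℝ :=
  (1 / 2) * sInf { c : ℝ | ∃ (Z : Type) (_i : Fintype Z) (p : Z → V) (q : Z → W),
    Surjective p ∧ Surjective q ∧ c = trdis DX DY p q }

/-- Diameter of a finite subset of a metric space. -/
def fdiam {M : Type} [MetricSpace M] (σ : Finset M) : ℝ :=
  (σ ×ˢ σ).fold max 0 fun p => dist p.1 p.2

/-- Metric distortion of a correspondence between metric spaces. -/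
def metDis {M N : Type} [MetricSpace M] [MetricSpace N] (R : Finset (M × N)) : ℝ :=
  (R ×ˢ R).fold max 0 fun p => |dist p.1.1 p.2.1 - dist p.1.2 p.2.2|

/-- Gromov–Hausdorff distance between finite metric spaces. -/
def dGHmet (M N : Type) [MetricSpace M] [MetricSpace N] : ℝ :=
  (1 / 2) * sInf { c : ℝ | ∃ R : Finset (M × N),
    (∀ x : M, ∃ y, (x, y) ∈ R) ∧ (∀ y : N, ∃ x, (x, y) ∈ R) ∧ c = metDis R }

/-- The single vertex extension `X_{w,r}^*`: the new vertex is `none : Option V`. -/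
def Dext (D : Finset V → ℝ) (w : V) (r : ℝ) : Finset (Option V) → ℝ := fun α =>
  if none ∈ α then D (insert w (Finset.univ.filter fun v : V => some v ∈ α)) + r
  else D (Finset.univ.filter fun v : V => some v ∈ α)

section Aux

lemma supSub_nonneg (g : Finset V → ℝ) : 0 ≤ supSub g :=
  (Finset.le_fold_max _).2 (Or.inl le_rfl)

lemma le_supSub (g : Finset V → ℝ) {α : Finset V} (hα : α.Nonempty) :
    g α ≤ supSub g :=
  (Finset.le_fold_max _).2 (Or.inr ⟨α, by simp [hα], le_rfl⟩)

lemma supSub_le_zero {g : Finset V → ℝ} (h : ∀ α : Finset V, α.Nonempty → g α ≤ 0) :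
    supSub g ≤ 0 :=
  (Finset.fold_max_le _).2 ⟨le_rfl, fun α hα => h α (Finset.mem_filter.1 hα).2⟩

lemma supSub_eq_zero {g : Finset V → ℝ} (h : ∀ α : Finset V, α.Nonempty → g α ≤ 0) :
    supSub g = 0 :=
  le_antisymm (supSub_le_zero h) (supSub_nonneg g)

/-- Restriction of a finset of `Option V` to `V`. -/
def res (α : Finset (Option V)) : Finset V :=
  Finset.univ.filter fun v : V => some v ∈ α

@[simp] lemma mem_res {α : Finset (Option V)} {v : V} : v ∈ res α ↔ some v ∈ α := by
  simp [res]

lemma Dext_of_mem (D : Finset V → ℝ) (w : V) (r : ℝ) {α : Finset (Option V)}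
    (h : none ∈ α) : Dext D w r α = D (insert w (res α)) + r := if_pos h

lemma Dext_of_not_mem (D : Finset V → ℝ) (w : V) (r : ℝ) {α : Finset (Option V)}
    (h : none ∉ α) : Dext D w r α = D (res α) := if_neg h

lemma res_mono {α β : Finset (Option V)} (h : α ⊆ β) : res α ⊆ res β := by
  intro v hv; simp only [mem_res] at *; exact h hv

lemma res_nonempty {α : Finset (Option V)} (hα : α.Nonempty) (h : none ∉ α) :
    (res α).Nonempty := by
  obtain ⟨x, hx⟩ := hα
  match x with
  | none => exact absurd hx h
  | some v => exact ⟨v, mem_res.2 hx⟩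

lemma res_insert_none {α : Finset (Option V)} : res (insert none α) = res α := by
  ext v; simp

lemma res_insert_some {α : Finset (Option V)} (w : V) :
    res (insert (some w) α) = insert w (res α) := by
  ext v; simp

@[simp] lemma res_univ : res (Finset.univ : Finset (Option V)) = Finset.univ := by
  ext v; simp

lemma image_getD_of_mem {α : Finset (Option V)} (w : V) (h : none ∈ α) :
    α.image (fun o => o.getD w) = insert w (res α) := by
  ext x
  simp only [Finset.mem_image, Finset.mem_insert, mem_res]
  constructor
  · rintro ⟨o, ho, rfl⟩
    match o with
    | none => exact Or.inl rfl
    | some v => exact Or.inr ho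
  · rintro (rfl | hx)
    · exact ⟨none, h, rfl⟩
    · exact ⟨some x, hx, rfl⟩

lemma image_getD_of_not_mem {α : Finset (Option V)} (w : V) (h : none ∉ α) :
    α.image (fun o => o.getD w) = res α := by
  ext x
  simp only [Finset.mem_image, mem_res]
  constructor
  · rintro ⟨o, ho, rfl⟩
    match o with
    | none => exact absurd ho h
    | some v => exact ho
  · exact fun hx => ⟨some x, hx, rfl⟩

lemma res_image_some (α : Finset V) : res (α.image some) = α := by
  ext v; simp

omit [Fintype V] in
lemma none_not_mem_image_some (α : Finset V) : none ∉ α.image some := by simp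

end Aux

/-- the single vertex extension has monotone size function,
`δ(v₀, w) = 0` hence `d_I^F(X_{w,r}^*, X^*) = 0`, while every tripod between `X_{w,r}^*`
and `X^*` has distortion at least `r`, hence `d_GH(X_{w,r}^*, X^*) ≥ r/2`. -/
theorem stmt_19 [Nonempty V] (D : Finset V → ℝ) (hD : Monot D) (w : V) (r : ℝ)
    (hr : 0 ≤ r) :
    Monot (Dext D w r) ∧
    vqd (Dext D w r) (none : Option V) (some w) = 0 ∧
    dIF (Dext D w r) D = 0 ∧
    (∀ (Z : Type) [Fintype Z] (p : Z → Option V) (q : Z → V),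
      Surjective p → Surjective q → r ≤ trdis (Dext D w r) D p q) ∧
    r / 2 ≤ dGHtri (Dext D w r) D := by
  -- Part 1: monotonicity
  have part1 : Monot (Dext D w r) := by
    intro α β hα hsub
    by_cases hβn : none ∈ β
    · by_cases hαn : none ∈ α
      · rw [Dext_of_mem D w r hαn, Dext_of_mem D w r hβn]
        have : D (insert w (res α)) ≤ D (insert w (res β)) :=
          hD ⟨w, Finset.mem_insert_self _ _⟩
            (Finset.insert_subset_insert _ (res_mono hsub))
        linarith
      · rw [Dext_of_not_mem D w r hαn, Dext_of_mem D w r hβn]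
        have : D (res α) ≤ D (insert w (res β)) :=
          hD (res_nonempty hα hαn)
            ((res_mono hsub).trans (Finset.subset_insert _ _))
        linarith
    · have hαn : none ∉ α := fun h => hβn (hsub h)
      rw [Dext_of_not_mem D w r hαn, Dext_of_not_mem D w r hβn]
      exact hD (res_nonempty hα hαn) (res_mono hsub)
  -- Part 2: vqd = 0
  have part2 : vqd (Dext D w r) (none : Option V) (some w) = 0 := by
    apply supSub_eq_zero
    intro α hα
    have key : Dext D w r (insert (some w) α) - Dext D w r (insert none α) ≤ 0 := by
      have h1 : Dext D w r (insert none α) = D (insert w (res α)) + r := by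
        rw [Dext_of_mem D w r (Finset.mem_insert_self _ _), res_insert_none]
      by_cases hαn : none ∈ α
      · have h2 : Dext D w r (insert (some w) α) = D (insert w (res α)) + r := by
          rw [Dext_of_mem D w r (Finset.mem_insert_of_mem hαn), res_insert_some,
            Finset.insert_idem]
        rw [h1, h2]; linarith
      · have h2 : Dext D w r (insert (some w) α) = D (insert w (res α)) := by
          rw [Dext_of_not_mem D w r (by simp [hαn]), res_insert_some]
        rw [h1, h2]; linarith
    convert key using 3 <;> exact Finset.ext fun x => by simp
  -- the interleaving maps
  set f : Option V → V := fun o => o.getD w with hf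
  set g : V → Option V := some with hg
  have hdeg1 : degF (Dext D w r) D f ≤ 0 := by
    apply supSub_le_zero
    intro α hα
    by_cases hαn : none ∈ α
    · rw [hf, image_getD_of_mem w hαn, Dext_of_mem D w r hαn]; linarith
    · rw [hf, image_getD_of_not_mem w hαn, Dext_of_not_mem D w r hαn]; linarith
  have hdeg2 : degF D (Dext D w r) g ≤ 0 := by
    apply supSub_le_zero
    intro α hα
    have key : Dext D w r (α.image some) - D α ≤ 0 := by
      rw [Dext_of_not_mem D w r (none_not_mem_image_some α), res_image_some]
      linarith
    convert key using 3 <;> exact Finset.ext fun x => by simp [hg]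
  have hcodeg1 : codegF (Dext D w r) (Dext D w r) (g ∘ f) id = 0 := by
    apply supSub_eq_zero
    intro α hα
    have key : Dext D w r (α.image (g ∘ f) ∪ α.image id) - Dext D w r α ≤ 0 := by
     rw [Finset.image_id]
     by_cases hαn : none ∈ α
     · have hmem : none ∈ α.image (g ∘ f) ∪ α := Finset.mem_union_right _ hαn
       have hres : res (α.image (g ∘ f) ∪ α) = insert w (res α) := by
         ext v
         simp only [mem_res, Finset.mem_union, Finset.mem_image, Finset.mem_insert,
           Function.comp, hf, hg]
         constructor
         · rintro (⟨o, ho, h⟩ | hv)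
           · match o with
             | none => exact Or.inl (Option.some.inj h).symm
             | some u => exact Or.inr (by rwa [← Option.some.inj h])
           · exact Or.inr hv
         · rintro (rfl | hv)
           · exact Or.inl ⟨none, hαn, rfl⟩
           · exact Or.inr hv
       rw [Dext_of_mem D w r hmem, hres, Dext_of_mem D w r hαn, Finset.insert_idem]
       ring_nf; exact le_rfl
     · have himg : α.image (g ∘ f) = α := by
         ext x
         simp only [Finset.mem_image, Function.comp, hf, hg]
         constructor
         · rintro ⟨o, ho, rfl⟩
           match o with
           | none => exact absurd ho hαn
           | some u => exact ho
         · intro hx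
           match x, hx with
           | none, hx => exact absurd hx hαn
           | some u, hx => exact ⟨some u, hx, rfl⟩
       rw [himg, Finset.union_self]
       linarith
    convert key using 3 <;> exact Finset.ext fun x => by simp [Function.comp, hf, hg]
  have hcodeg2 : codegF D D (f ∘ g) id = 0 := by
    apply supSub_eq_zero
    intro α hα
    have : f ∘ g = id := by funext v; rfl
    rw [this, Finset.image_id, Finset.union_self]
    linarith
  have hchain : ∀ {U₀ : Type} [Fintype U₀] (DX : Finset U₀ → ℝ)
      (a b : U₀ → U₀), codegF DX DX a b = 0 → codegInfF DX DX a b ≤ 0 := by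
    intro U₀ _ DX a b hab
    apply csInf_le
    · refine ⟨0, fun c hc => ?_⟩
      obtain ⟨n, hn, F, h0, h1, rfl⟩ := hc
      exact (Finset.le_fold_max _).2 (Or.inl le_rfl)
    · refine ⟨1, one_pos, fun i => Nat.casesOn i a fun _ => b, rfl, rfl, ?_⟩
      rw [Finset.range_one, Finset.fold_singleton]
      show (0 : ℝ) = max (codegF DX DX a b) 0
      rw [hab]; simp
  have hint : IsInterleaving (Dext D w r) D f g 0 :=
    ⟨hdeg1, hdeg2, by simpa using hchain (Dext D w r) (g ∘ f) id hcodeg1,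
      by simpa using hchain D (f ∘ g) id hcodeg2⟩
  have part3 : dIF (Dext D w r) D = 0 := by
    apply le_antisymm
    · apply csInf_le
      · exact ⟨0, fun ε hε => hε.1⟩
      · exact ⟨le_rfl, f, g, hint⟩
    · exact le_csInf ⟨0, le_rfl, f, g, hint⟩ fun ε hε => hε.1
  -- Part 4: tripod distortion
  have part4 : ∀ (Z : Type) [Fintype Z] (p : Z → Option V) (q : Z → V),
      Surjective p → Surjective q → r ≤ trdis (Dext D w r) D p q := by
    intro Z _ p q hp hq
    have hZ : Nonempty Z := by
      obtain ⟨z, -⟩ := hq (Classical.arbitrary V); exact ⟨z⟩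
    have huniv : (Finset.univ : Finset Z).Nonempty := Finset.univ_nonempty
    rw [trdis]
    refine le_trans ?_ (le_supSub _ huniv)
    have key : |Dext D w r ((Finset.univ : Finset Z).image p)
        - D ((Finset.univ : Finset Z).image q)| = r := by
      rw [Finset.image_univ_of_surjective hp, Finset.image_univ_of_surjective hq,
        Dext_of_mem D w r (Finset.mem_univ _), res_univ,
        Finset.insert_eq_self.2 (Finset.mem_univ w), add_sub_cancel_left,
        abs_of_nonneg hr]
    convert key.ge using 4 <;> exact Finset.ext fun x => by simp
  refine ⟨part1, part2, part3, part4, ?_⟩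
  -- Part 5
  have hS : r ≤ sInf { c : ℝ | ∃ (Z : Type) (_i : Fintype Z) (p : Z → Option V)
      (q : Z → V), Surjective p ∧ Surjective q ∧ c = trdis (Dext D w r) D p q } := by
    apply le_csInf
    · refine ⟨trdis (Dext D w r) D (Prod.fst : Option V × V → Option V) Prod.snd,
        Option V × V, inferInstance, Prod.fst, Prod.snd,
        Prod.fst_surjective, Prod.snd_surjective, rfl⟩
    · rintro c ⟨Z, _i, p, q, hp, hq, rfl⟩
      exact part4 Z p q hp hq
  rw [dGHtri]
  linarith
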